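/- Let K be a field, n ≥ 1, and let V, W be linear subspaces of M_n(K) with codim V + codim W < n. Then M_n(K) is spanned as a K-vector space by the set of products {BC : B ∈ V, C ∈ W}. -/
import Mathlib

open Matrix Module

-- auxiliary: trace picks out entries
lemma trace_stdBasisMatrix_mul {K : Type*} [Field K] {n : ℕ}
    (X : Matrix (Fin n) (Fin n) K) (i j : Fin n) :
    Matrix.trace (Matrix.single j i 1 * X) = X i j := by
  simp [Matrix.trace, Matrix.diag, Matrix.mul_apply, Matrix.single, ite_and,
    Finset.sum_ite_eq]

theorem span_products_two_subspaces (K : Type*) [Field K] (n : ℕ) (hn : 0 < n)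
    (V W : Submodule K (Matrix (Fin n) (Fin n) K))
    (h : (n ^ 2 - Module.finrank K V) + (n ^ 2 - Module.finrank K W) < n) :
    Submodule.span K {M : Matrix (Fin n) (Fin n) K | ∃ B ∈ V, ∃ C ∈ W, M = B * C} = ⊤ := by
  by_contra hne
  set Mat := Matrix (Fin n) (Fin n) K
  set S : Set Mat := {M : Mat | ∃ B ∈ V, ∃ C ∈ W, M = B * C} with hS
  obtain ⟨f, hf0, hfmap⟩ :=
    Submodule.exists_dual_map_eq_bot_of_lt_top (p := Submodule.span K S)
      (lt_top_iff_ne_top.mpr hne) inferInstance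
  have hfS : ∀ B ∈ V, ∀ C ∈ W, f (B * C) = 0 := by
    intro B hB C hC
    have hmem : B * C ∈ Submodule.span K S :=
      Submodule.subset_span ⟨B, hB, C, hC, rfl⟩
    have : f (B * C) ∈ (Submodule.span K S).map f := ⟨_, hmem, rfl⟩
    rwa [hfmap, Submodule.mem_bot] at this
  -- representing matrix A
  set A : Mat := Matrix.of (fun i j => f (Matrix.single j i 1)) with hA
  have hfA : ∀ M : Mat, f M = Matrix.trace (M * A) := by
    intro M
    conv_lhs => rw [matrix_eq_sum_single M]
    rw [map_sum]
    simp_rw [map_sum]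
    have : ∀ (i j : Fin n), f (Matrix.single i j (M i j)) = M i j * A j i := by
      intro i j
      have : Matrix.single i j (M i j) = (M i j) • Matrix.single i j 1 := by
        rw [Matrix.smul_single, smul_eq_mul, mul_one]
      rw [this, _root_.map_smul, smul_eq_mul, hA]
      rfl
    simp_rw [this]
    rw [Matrix.trace]
    refine Finset.sum_congr rfl fun x _ => ?_
    rw [Matrix.diag_apply, Matrix.mul_apply]
  -- A is nonzero
  obtain ⟨i0, j0, hij⟩ : ∃ i j, A i j ≠ 0 := by
    by_contra hc
    push_neg at hc
    apply hf0
    ext M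
    have hA0 : A = 0 := by ext i j; exact hc i j
    simp [hfA M, hA0]
  -- the evaluation map against column j0 of A
  set v : Fin n → K := fun k => A k j0 with hv
  let Sv : Mat →ₗ[K] (Fin n → K) :=
    { toFun := fun C => C *ᵥ v
      map_add' := fun x y => Matrix.add_mulVec x y v
      map_smul' := fun c x => by simpa using Matrix.smul_mulVec c x v }
  have hSsurj : Function.Surjective Sv := by
    intro w
    refine ⟨Matrix.of (fun i k => w i * (if k = i0 then (v i0)⁻¹ else 0)), ?_⟩
    ext i
    have hvi0 : v i0 ≠ 0 := hij
    simp [Sv, Matrix.mulVec, dotProduct, mul_assoc, Finset.mul_sum,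
      Finset.sum_ite_eq', inv_mul_cancel₀ hvi0]
  have hMatrank : finrank K Mat = n ^ 2 := by
    simp [Mat, Module.finrank_matrix, sq]
  have hkerSv : finrank K (LinearMap.ker Sv) + n = n ^ 2 := by
    have := LinearMap.finrank_range_add_finrank_ker Sv
    rw [LinearMap.range_eq_top.mpr hSsurj] at this
    have h2 : finrank K (⊤ : Submodule K (Fin n → K)) = n := by
      simp
    rw [h2] at this
    omega
  -- the map C ↦ (B ↦ f (B * C))
  let Φ : Mat →ₗ[K] Module.Dual K Mat :=
    { toFun := fun C =>
        { toFun := fun B => f (B * C)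
          map_add' := fun x y => by simp [add_mul]
          map_smul' := fun c x => by simp [smul_mul_assoc] }
      map_add' := fun x y => by ext B; simp [mul_add]
      map_smul' := fun c x => by ext B; simp [mul_smul_comm] }
  let Φr : W →ₗ[K] Module.Dual K Mat := Φ ∘ₗ W.subtype
  have hrange : LinearMap.range Φr ≤ V.dualAnnihilator := by
    rintro _ ⟨⟨C, hC⟩, rfl⟩
    rw [Submodule.mem_dualAnnihilator]
    intro B hB
    exact hfS B hB C hC
  have hker : ∀ x : W, x ∈ LinearMap.ker Φr → (x : Mat) ∈ LinearMap.ker Sv := by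
    rintro ⟨C, hC⟩ hx
    rw [LinearMap.mem_ker] at hx ⊢
    have hB : ∀ B : Mat, Matrix.trace (B * (C * A)) = 0 := by
      intro B
      have h1 : f (B * C) = 0 := DFunLike.congr_fun hx B
      rw [hfA, mul_assoc] at h1
      exact h1
    have hCA : ∀ k : Fin n, (C * A) k j0 = 0 := by
      intro k
      have := hB (Matrix.single j0 k 1)
      rwa [trace_stdBasisMatrix_mul] at this
    ext k
    have : Sv C k = (C * A) k j0 := by
      rw [Matrix.mul_apply]
      simp [Sv, Matrix.mulVec, dotProduct, hv]
    rw [this, hCA]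
    rfl
  let ψ : LinearMap.ker Φr →ₗ[K] LinearMap.ker Sv :=
    LinearMap.codRestrict _ ((W.subtype) ∘ₗ (LinearMap.ker Φr).subtype)
      (fun x => hker x.1 x.2)
  have hψinj : Function.Injective ψ := by
    intro a b hab
    have h2 := congrArg (fun z : LinearMap.ker Sv => (z : Mat)) hab
    simp only [ψ, LinearMap.codRestrict_apply, LinearMap.comp_apply,
      Submodule.subtype_apply] at h2
    exact Subtype.ext (Subtype.ext h2)
  have hkerle : finrank K (LinearMap.ker Φr) ≤ finrank K (LinearMap.ker Sv) :=
    LinearMap.finrank_le_finrank_of_injective hψinj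
  have hann : finrank K V.dualAnnihilator + finrank K V = n ^ 2 := by
    have h1 : finrank K (Matrix (Fin n) (Fin n) K ⧸ V) = finrank K V.dualAnnihilator := by
      exact LinearEquiv.finrank_eq (Subspace.quotEquivAnnihilator V)
    have h2 := Submodule.finrank_quotient_add_finrank V
    rw [hMatrank, h1] at h2
    exact h2
  have hrngle : finrank K (LinearMap.range Φr) ≤ finrank K V.dualAnnihilator :=
    Submodule.finrank_mono hrange
  have hrn := LinearMap.finrank_range_add_finrank_ker Φr
  have hVle : finrank K V ≤ n ^ 2 := hMatrank ▸ Submodule.finrank_le V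
  have hWle : finrank K W ≤ n ^ 2 := hMatrank ▸ Submodule.finrank_le W
  omega
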